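/- The following equality of subsets of ℤ³ holds: (M + G(a₁,a₂)) ∩ [ (M + G(a₁,a₃)) ∪ (M + G(a₂,a₄)) ∪ (M + G(a₃,a₄)) ] = (M + G(a₁,a₂)) ∩ [ (M + ℤa₁) ∪ (M + ℤa₂) ]. Equivalently, the sector P_∇ for the filter ∇ = {σ₁₂, ℝ_{≥0}A} satisfies P_∇ = (M + G(a₁,a₂)) \ [ (M + ℤa₁) ∪ (M + ℤa₂) ]. -/

import Mathlib

/-!
Hartshorne's example: `a₁ = (1,0,0)`, `a₂ = (1,1,0)`, `a₃ = (1,0,1)`, `a₄ = (1,1,1)`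
in `ℤ³`, `M` the submonoid they generate (so `K[M] = K[r,rs,rt,rst]`), `ℤv` the subgroup
generated by a vector `v`, and `G(v,w)` the subgroup generated by `v, w`.
-/

open Pointwise

/-- `a₁ = (1,0,0)`. -/
def a1 : Fin 3 → ℤ := ![1, 0, 0]
/-- `a₂ = (1,1,0)`. -/
def a2 : Fin 3 → ℤ := ![1, 1, 0]
/-- `a₃ = (1,0,1)`. -/
def a3 : Fin 3 → ℤ := ![1, 0, 1]
/-- `a₄ = (1,1,1)`. -/
def a4 : Fin 3 → ℤ := ![1, 1, 1]

/-- The submonoid `M` of `ℤ³` generated by `a₁, a₂, a₃, a₄`. -/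
def Mmon : AddSubmonoid (Fin 3 → ℤ) := AddSubmonoid.closure {a1, a2, a3, a4}

/-- The subgroup `ℤv` of `ℤ³` generated by `v`. -/
def Zv (v : Fin 3 → ℤ) : AddSubgroup (Fin 3 → ℤ) := AddSubgroup.closure {v}

/-- The subgroup `G(v,w)` of `ℤ³` generated by `v` and `w`. -/
def Gvw (v w : Fin 3 → ℤ) : AddSubgroup (Fin 3 → ℤ) := AddSubgroup.closure {v, w}

/-- Nonnegative multiples of generators lie in `M`. -/
lemma smul_gen_mem_M {v : Fin 3 → ℤ} (hv : v ∈ ({a1, a2, a3, a4} : Set (Fin 3 → ℤ)))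
    {k : ℤ} (hk : 0 ≤ k) : k • v ∈ Mmon := by
  lift k to ℕ using hk
  rw [natCast_zsmul]
  exact Mmon.nsmul_mem (AddSubmonoid.subset_closure hv) k

lemma M_bounds : ∀ x ∈ Mmon, 0 ≤ x 1 ∧ 0 ≤ x 2 ∧ x 1 ≤ x 0 ∧ x 2 ≤ x 0 := by
  intro x hx
  induction hx using AddSubmonoid.closure_induction with
  | mem v hv => rcases hv with rfl | rfl | rfl | rfl <;> simp [a1, a2, a3, a4]
  | zero => norm_num
  | add a b _ _ ha hb =>
      obtain ⟨h1, h2, h3, h4⟩ := ha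
      obtain ⟨g1, g2, g3, g4⟩ := hb
      refine ⟨?_, ?_, ?_, ?_⟩ <;> simp only [Pi.add_apply] <;> omega

/-- Full characterization of membership in `M` (sufficiency). -/
lemma mem_M_of {x : Fin 3 → ℤ} (h1 : 0 ≤ x 1) (h2 : 0 ≤ x 2) (h3 : x 1 ≤ x 0)
    (h4 : x 2 ≤ x 0) : x ∈ Mmon := by
  set s := min (x 1) (x 2) with hs
  have hx : x = (x 0 - x 1 - x 2 + s) • a1 + (x 1 - s) • a2 + (x 2 - s) • a3 + s • a4 := by
    funext i
    fin_cases i <;> simp [a1, a2, a3, a4] <;> omega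
  rw [hx]
  refine AddSubmonoid.add_mem _ (AddSubmonoid.add_mem _ (AddSubmonoid.add_mem _ ?_ ?_) ?_) ?_ <;>
    exact smul_gen_mem_M (by simp) (by omega)

lemma smul_mem_closure2 {v w : Fin 3 → ℤ} (k : ℤ) :
    k • v ∈ Gvw v w ∧ k • w ∈ Gvw v w :=
  ⟨AddSubgroup.zsmul_mem _ (AddSubgroup.subset_closure (by simp)) k,
   AddSubgroup.zsmul_mem _ (AddSubgroup.subset_closure (by simp)) k⟩

lemma comb_mem_closure2 {v w : Fin 3 → ℤ} (k l : ℤ) : k • v + l • w ∈ Gvw v w :=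
  AddSubgroup.add_mem _ (smul_mem_closure2 k).1 (smul_mem_closure2 l).2

lemma G_bound {s : Set (Fin 3 → ℤ)} (f : (Fin 3 → ℤ) →+ ℤ) (hs : ∀ v ∈ s, f v = 0) :
    ∀ x ∈ AddSubgroup.closure s, f x = 0 := by
  intro x hx
  have : AddSubgroup.closure s ≤ f.ker := by
    rw [AddSubgroup.closure_le]
    intro v hv
    exact hs v hv
  exact this hx

def f1 : (Fin 3 → ℤ) →+ ℤ := AddMonoidHom.mk' (fun x => x 1) (by intro a b; simp)
def f2 : (Fin 3 → ℤ) →+ ℤ := AddMonoidHom.mk' (fun x => x 2) (by intro a b; simp)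
def f01 : (Fin 3 → ℤ) →+ ℤ := AddMonoidHom.mk' (fun x => x 0 - x 1) (by intro a b; simp; ring)
def f02 : (Fin 3 → ℤ) →+ ℤ := AddMonoidHom.mk' (fun x => x 0 - x 2) (by intro a b; simp; ring)

lemma S12 : (Mmon : Set (Fin 3 → ℤ)) + (Gvw a1 a2 : Set (Fin 3 → ℤ)) = {x | 0 ≤ x 2} := by
  ext x
  constructor
  · rintro ⟨m, hm, g, hg, rfl⟩
    have h1 := (M_bounds m hm).2.1
    have h2 : f2 g = 0 := G_bound f2 (by rintro v (rfl | rfl) <;> rfl) g hg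
    simp only [f2, AddMonoidHom.mk'_apply] at h2
    simp only [Set.mem_setOf_eq, Pi.add_apply]
    omega
  · intro hx
    simp only [Set.mem_setOf_eq] at hx
    refine ⟨x - ((x 0 - x 2 - x 1) • a1 + x 1 • a2), mem_M_of ?_ ?_ ?_ ?_, _,
      comb_mem_closure2 _ _, sub_add_cancel x _⟩ <;>
      simp [a1, a2] <;> omega

lemma S13 : (Mmon : Set (Fin 3 → ℤ)) + (Gvw a1 a3 : Set (Fin 3 → ℤ)) = {x | 0 ≤ x 1} := by
  ext x
  constructor
  · rintro ⟨m, hm, g, hg, rfl⟩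
    have h1 := (M_bounds m hm).1
    have h2 : f1 g = 0 := G_bound f1 (by rintro v (rfl | rfl) <;> rfl) g hg
    simp only [f1, AddMonoidHom.mk'_apply] at h2
    simp only [Set.mem_setOf_eq, Pi.add_apply]
    omega
  · intro hx
    simp only [Set.mem_setOf_eq] at hx
    refine ⟨x - ((x 0 - x 1 - x 2) • a1 + x 2 • a3), mem_M_of ?_ ?_ ?_ ?_, _,
      comb_mem_closure2 _ _, sub_add_cancel x _⟩ <;>
      simp [a1, a3] <;> omega

lemma S24 : (Mmon : Set (Fin 3 → ℤ)) + (Gvw a2 a4 : Set (Fin 3 → ℤ)) = {x | x 1 ≤ x 0} := by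
  ext x
  constructor
  · rintro ⟨m, hm, g, hg, rfl⟩
    have h1 := (M_bounds m hm).2.2.1
    have h2 : f01 g = 0 := G_bound f01 (by rintro v (rfl | rfl) <;> simp [f01, a2, a4]) g hg
    simp only [f01, AddMonoidHom.mk'_apply] at h2
    simp only [Set.mem_setOf_eq, Pi.add_apply]
    omega
  · intro hx
    simp only [Set.mem_setOf_eq] at hx
    refine ⟨x - ((x 1 - x 2) • a2 + x 2 • a4), mem_M_of ?_ ?_ ?_ ?_, _,
      comb_mem_closure2 _ _, sub_add_cancel x _⟩ <;>
      simp [a2, a4] <;> omega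

lemma S34 : (Mmon : Set (Fin 3 → ℤ)) + (Gvw a3 a4 : Set (Fin 3 → ℤ)) = {x | x 2 ≤ x 0} := by
  ext x
  constructor
  · rintro ⟨m, hm, g, hg, rfl⟩
    have h1 := (M_bounds m hm).2.2.2
    have h2 : f02 g = 0 := G_bound f02 (by rintro v (rfl | rfl) <;> simp [f02, a3, a4]) g hg
    simp only [f02, AddMonoidHom.mk'_apply] at h2
    simp only [Set.mem_setOf_eq, Pi.add_apply]
    omega
  · intro hx
    simp only [Set.mem_setOf_eq] at hx
    refine ⟨x - ((x 2 - x 1) • a3 + x 1 • a4), mem_M_of ?_ ?_ ?_ ?_, _,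
      comb_mem_closure2 _ _, sub_add_cancel x _⟩ <;>
      simp [a3, a4] <;> omega

lemma SZ1 : (Mmon : Set (Fin 3 → ℤ)) + (Zv a1 : Set (Fin 3 → ℤ)) = {x | 0 ≤ x 1 ∧ 0 ≤ x 2} := by
  ext x
  constructor
  · rintro ⟨m, hm, g, hg, rfl⟩
    obtain ⟨h1, h2, -, -⟩ := M_bounds m hm
    have hg1 : f1 g = 0 := G_bound f1 (by rintro v rfl; rfl) g hg
    have hg2 : f2 g = 0 := G_bound f2 (by rintro v rfl; rfl) g hg
    simp only [f1, f2, AddMonoidHom.mk'_apply] at hg1 hg2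
    simp only [Set.mem_setOf_eq, Pi.add_apply]
    omega
  · rintro ⟨h1, h2⟩
    refine ⟨x - (x 0 - x 1 - x 2) • a1, mem_M_of ?_ ?_ ?_ ?_, _,
      AddSubgroup.zsmul_mem _ (AddSubgroup.subset_closure (by simp)) _, sub_add_cancel x _⟩ <;>
      simp [a1] <;> omega

lemma SZ2 : (Mmon : Set (Fin 3 → ℤ)) + (Zv a2 : Set (Fin 3 → ℤ)) = {x | 0 ≤ x 2 ∧ x 1 ≤ x 0} := by
  ext x
  constructor
  · rintro ⟨m, hm, g, hg, rfl⟩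
    obtain ⟨-, h2, h3, -⟩ := M_bounds m hm
    have hg1 : f01 g = 0 := G_bound f01 (by rintro v rfl; simp [f01, a2]) g hg
    have hg2 : f2 g = 0 := G_bound f2 (by rintro v rfl; rfl) g hg
    simp only [f01, f2, AddMonoidHom.mk'_apply] at hg1 hg2
    simp only [Set.mem_setOf_eq, Pi.add_apply]
    omega
  · rintro ⟨h1, h2⟩
    refine ⟨x - (min (x 1) (x 0 - x 2)) • a2, mem_M_of ?_ ?_ ?_ ?_, _,
      AddSubgroup.zsmul_mem _ (AddSubgroup.subset_closure (by simp)) _, sub_add_cancel x _⟩ <;>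
      simp [a2] <;> omega

/-- The equality of subsets of `ℤ³`:
`(M+G(a₁,a₂)) ∩ [(M+G(a₁,a₃)) ∪ (M+G(a₂,a₄)) ∪ (M+G(a₃,a₄))]
  = (M+G(a₁,a₂)) ∩ [(M+ℤa₁) ∪ (M+ℤa₂)]`;
equivalently, the sector for the filter `∇ = {σ₁₂, ℝ₊A}` satisfies
`P_∇ = (M+G(a₁,a₂)) \ [(M+ℤa₁) ∪ (M+ℤa₂)]`. -/
theorem hartshorne_sector_equality :
    (((Mmon : Set (Fin 3 → ℤ)) + (Gvw a1 a2 : Set (Fin 3 → ℤ))) ∩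
        (((Mmon : Set (Fin 3 → ℤ)) + (Gvw a1 a3 : Set (Fin 3 → ℤ))) ∪
          ((Mmon : Set (Fin 3 → ℤ)) + (Gvw a2 a4 : Set (Fin 3 → ℤ))) ∪
          ((Mmon : Set (Fin 3 → ℤ)) + (Gvw a3 a4 : Set (Fin 3 → ℤ))))
      = ((Mmon : Set (Fin 3 → ℤ)) + (Gvw a1 a2 : Set (Fin 3 → ℤ))) ∩
          (((Mmon : Set (Fin 3 → ℤ)) + (Zv a1 : Set (Fin 3 → ℤ))) ∪
            ((Mmon : Set (Fin 3 → ℤ)) + (Zv a2 : Set (Fin 3 → ℤ))))) ∧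
    (((Mmon : Set (Fin 3 → ℤ)) + (Gvw a1 a2 : Set (Fin 3 → ℤ))) \
        (((Mmon : Set (Fin 3 → ℤ)) + (Gvw a1 a3 : Set (Fin 3 → ℤ))) ∪
          ((Mmon : Set (Fin 3 → ℤ)) + (Gvw a2 a4 : Set (Fin 3 → ℤ))) ∪
          ((Mmon : Set (Fin 3 → ℤ)) + (Gvw a3 a4 : Set (Fin 3 → ℤ))))
      = ((Mmon : Set (Fin 3 → ℤ)) + (Gvw a1 a2 : Set (Fin 3 → ℤ))) \
          (((Mmon : Set (Fin 3 → ℤ)) + (Zv a1 : Set (Fin 3 → ℤ))) ∪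
            ((Mmon : Set (Fin 3 → ℤ)) + (Zv a2 : Set (Fin 3 → ℤ))))) := by
  
  rw [S12, S13, S24, S34, SZ1, SZ2]
  constructor <;> ext x <;>
    simp only [Set.mem_inter_iff, Set.mem_diff, Set.mem_union, Set.mem_setOf_eq] <;>
    constructor <;> (intro h; omega)
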